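/- Let G be a nontrivial finite group. The graph G_2(G) = Cay(G^2, S) is strongly regular with parameters (|G|^2, 3(|G|−1), |G|, 6): it has |G|^2 vertices, is 3(|G|−1)-regular, adjacent vertices have exactly |G| common neighbours, and distinct non-adjacent vertices have exactly 6 common neighbours. -/

import Mathlib

namespace CayleyStmt8

variable {G : Type*}

def intvl [Group G] (m : ℕ) (x : G) (k l : ℕ) : Fin m → G :=
  fun i => if k ≤ i.1 + 1 ∧ i.1 + 1 < l then x else 1

def cS (G : Type*) [Group G] (m : ℕ) : Set (Fin m → G) :=
  {v | ∃ (x : G) (k l : ℕ), x ≠ 1 ∧ 1 ≤ k ∧ k < l ∧ l ≤ m + 1 ∧ v = intvl m x k l}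

def cAdj [Group G] (m : ℕ) (g h : Fin m → G) : Prop := h * g⁻¹ ∈ cS G m

section Aux

variable [Group G]

/-- The defining predicate of `cS G 2` in coordinates. -/
def P (a b : G) : Prop := (a ≠ 1 ∧ b = 1) ∨ (a = 1 ∧ b ≠ 1) ∨ (a = b ∧ a ≠ 1)

lemma mem_cS_iff (v : Fin 2 → G) : v ∈ cS G 2 ↔ P (v 0) (v 1) := by
  constructor
  · rintro ⟨x, k, l, hx, hk, hkl, hl, rfl⟩
    have hk2 : k ≤ 2 := by omega
    have hl3 : l ≤ 3 := by omega
    interval_cases k <;> interval_cases l <;> simp [intvl, P, hx]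
  · rintro (⟨h0, h1⟩ | ⟨h0, h1⟩ | ⟨h0, h1⟩)
    · exact ⟨v 0, 1, 2, h0, le_refl _, by norm_num, by norm_num, by
        funext i; fin_cases i <;> simp [intvl, h1]⟩
    · exact ⟨v 1, 2, 3, h1, by norm_num, by norm_num, by norm_num, by
        funext i; fin_cases i <;> simp [intvl, h0]⟩
    · exact ⟨v 0, 1, 3, h1, le_refl _, by norm_num, by norm_num, by
        funext i; fin_cases i <;> simp [intvl, h0]⟩

lemma cAdj_iff (g h : Fin 2 → G) :
    cAdj 2 g h ↔ P (h 0 * (g 0)⁻¹) (h 1 * (g 1)⁻¹) :=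
  mem_cS_iff (h * g⁻¹)

omit [Group G] in
lemma fpair_injective : Function.Injective (fun q : G × G => (![q.1, q.2] : Fin 2 → G)) := by
  rintro ⟨a, b⟩ ⟨c, d⟩ h
  have h0 := congrFun h 0
  have h1 := congrFun h 1
  simp at h0 h1
  simp [h0, h1]

omit [Group G] in
lemma ncard_setQ (Q : G → G → Prop) :
    {v : Fin 2 → G | Q (v 0) (v 1)}.ncard = {q : G × G | Q q.1 q.2}.ncard := by
  have : {v : Fin 2 → G | Q (v 0) (v 1)} =
      (fun q : G × G => (![q.1, q.2] : Fin 2 → G)) '' {q | Q q.1 q.2} := by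
    ext v
    simp only [Set.mem_setOf_eq, Set.mem_image, Prod.exists]
    constructor
    · intro h
      refine ⟨v 0, v 1, h, ?_⟩
      funext i; fin_cases i <;> simp
    · rintro ⟨a, b, h, rfl⟩
      simpa using h
  rw [this, Set.ncard_image_of_injective _ fpair_injective]

lemma shift_ncard (a b : G) (T : Set (G × G)) :
    {q : G × G | (q.1 * a⁻¹, q.2 * b⁻¹) ∈ T}.ncard = T.ncard := by
  have : {q : G × G | (q.1 * a⁻¹, q.2 * b⁻¹) ∈ T} =
      (fun q : G × G => (q.1 * a, q.2 * b)) '' T := by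
    ext ⟨x, y⟩
    simp only [Set.mem_setOf_eq, Set.mem_image, Prod.exists, Prod.mk.injEq]
    constructor
    · intro h
      exact ⟨x * a⁻¹, y * b⁻¹, h, by simp, by simp⟩
    · rintro ⟨u, w, h, rfl, rfl⟩
      simpa using h
  rw [this]
  refine Set.ncard_image_of_injective _ ?_
  rintro ⟨x, y⟩ ⟨u, w⟩ h
  simp only [Prod.mk.injEq, mul_left_inj] at h
  simp [h.1, h.2]

variable [Fintype G]

lemma ncard_compl_one : ({1}ᶜ : Set G).ncard = Fintype.card G - 1 := by
  have h := Set.ncard_add_ncard_compl ({1} : Set G)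
  rw [Set.ncard_singleton, Nat.card_eq_fintype_card] at h
  omega

lemma ncard_compl_pair {c : G} (hc : c ≠ 1) :
    ({1, c}ᶜ : Set G).ncard = Fintype.card G - 2 := by
  have h2 : ({1, c} : Set G).ncard = 2 := Set.ncard_pair (Ne.symm hc)
  have h := Set.ncard_add_ncard_compl ({1, c} : Set G)
  rw [h2, Nat.card_eq_fintype_card] at h
  omega

lemma count_P : {q : G × G | P q.1 q.2}.ncard = 3 * (Fintype.card G - 1) := by
  classical
  have hinj1 : Function.Injective (fun x : G => (x, (1:G))) := by
    intro x y h; simpa using h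
  have hinj2 : Function.Injective (fun x : G => ((1:G), x)) := by
    intro x y h; simpa using h
  have hinj3 : Function.Injective (fun x : G => (x, x)) := by
    intro x y h; exact congrArg Prod.fst h
  have hsplit : {q : G × G | P q.1 q.2} =
      ((fun x : G => (x, (1:G))) '' {1}ᶜ) ∪
        (((fun x : G => ((1:G), x)) '' {1}ᶜ) ∪ ((fun x : G => (x, x)) '' {1}ᶜ)) := by
    ext ⟨a, b⟩
    simp only [Set.mem_setOf_eq, Set.mem_union, Set.mem_image, Set.mem_compl_iff,
      Set.mem_singleton_iff, Prod.mk.injEq, P]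
    constructor
    · rintro (⟨h1, h2⟩ | ⟨h1, h2⟩ | ⟨h1, h2⟩)
      · exact Or.inl ⟨a, h1, rfl, h2.symm⟩
      · exact Or.inr (Or.inl ⟨b, h2, h1.symm, rfl⟩)
      · exact Or.inr (Or.inr ⟨a, h2, rfl, h1⟩)
    · rintro (⟨x, hx, rfl, rfl⟩ | ⟨x, hx, rfl, rfl⟩ | ⟨x, hx, rfl, rfl⟩)
      · exact Or.inl ⟨hx, rfl⟩
      · exact Or.inr (Or.inl ⟨rfl, hx⟩)
      · exact Or.inr (Or.inr ⟨rfl, hx⟩)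
  have hd23 : Disjoint ((fun x : G => ((1:G), x)) '' {1}ᶜ) ((fun x : G => (x, x)) '' {1}ᶜ) := by
    rw [Set.disjoint_left]
    rintro p ⟨x, hx, rfl⟩ ⟨y, hy, hp⟩
    simp only [Prod.mk.injEq] at hp
    exact hy hp.1
  have hd1 : Disjoint ((fun x : G => (x, (1:G))) '' {1}ᶜ)
      (((fun x : G => ((1:G), x)) '' {1}ᶜ) ∪ ((fun x : G => (x, x)) '' {1}ᶜ)) := by
    rw [Set.disjoint_left]
    rintro p ⟨x, hx, rfl⟩ (⟨y, hy, hp⟩ | ⟨y, hy, hp⟩)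
    · simp only [Prod.mk.injEq] at hp
      exact hx hp.1.symm
    · simp only [Prod.mk.injEq] at hp
      exact hy hp.2
  rw [hsplit, Set.ncard_union_eq hd1, Set.ncard_union_eq hd23,
    Set.ncard_image_of_injective _ hinj1, Set.ncard_image_of_injective _ hinj2,
    Set.ncard_image_of_injective _ hinj3, ncard_compl_one]
  omega

lemma count_adj (hG : 1 < Fintype.card G) {c d : G} (h : P c d) :
    {q : G × G | P q.1 q.2 ∧ P (q.1 * c⁻¹) (q.2 * d⁻¹)}.ncard = Fintype.card G := by
  classical
  rcases h with ⟨hc, rfl⟩ | ⟨rfl, hd⟩ | ⟨rfl, hc⟩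
  · -- d = 1
    have hset : {q : G × G | P q.1 q.2 ∧ P (q.1 * c⁻¹) (q.2 * (1:G)⁻¹)} =
        ((fun x : G => (x, (1:G))) '' ({1, c}ᶜ)) ∪ {((1:G), c⁻¹), (c, c)} := by
      ext ⟨a, b⟩
      simp only [Set.mem_setOf_eq, Set.mem_union, Set.mem_image, Set.mem_compl_iff,
        Set.mem_insert_iff, Set.mem_singleton_iff, Prod.mk.injEq, inv_one, mul_one, not_or, P]
      constructor
      · rintro ⟨(⟨h1, rfl⟩ | ⟨rfl, h2⟩ | ⟨rfl, h2⟩),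
          (⟨q1, q2⟩ | ⟨q1, q2⟩ | ⟨q1, q2⟩)⟩
        · exact Or.inl ⟨a, ⟨h1, fun e => q1 (by simp [e])⟩, rfl, rfl⟩
        · exact absurd rfl q2
        · exact absurd q1 q2
        · exact absurd q2 h2
        · exact absurd (by simpa using q1) hc
        · exact Or.inr (Or.inl ⟨rfl, by rw [← q1]; simp⟩)
        · exact absurd q2 h2
        · exact Or.inr (Or.inr ⟨by simpa [mul_inv_eq_one] using q1,
            by simpa [mul_inv_eq_one] using q1⟩)
        · exact absurd (by simpa using q1) hc
      · rintro (⟨x, ⟨hx1, hx2⟩, rfl, rfl⟩ | ⟨rfl, rfl⟩ | ⟨rfl, rfl⟩)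
        · exact ⟨Or.inl ⟨hx1, rfl⟩, Or.inl ⟨by simp [mul_inv_eq_one, hx2], rfl⟩⟩
        · exact ⟨Or.inr (Or.inl ⟨rfl, by simp [hc]⟩),
            Or.inr (Or.inr ⟨by simp, by simp [hc]⟩)⟩
        · exact ⟨Or.inr (Or.inr ⟨rfl, hc⟩), Or.inr (Or.inl ⟨by simp, by simp [hc]⟩)⟩
    have hdisj : Disjoint ((fun x : G => (x, (1:G))) '' ({1, c}ᶜ))
        ({((1:G), c⁻¹), (c, c)} : Set (G × G)) := by
      rw [Set.disjoint_left]
      rintro p ⟨x, hx, rfl⟩ (h | h)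
      · exact hc (inv_eq_one.mp (Prod.ext_iff.mp h).2.symm)
      · exact hc ((Prod.ext_iff.mp h).2.symm)
    have hinj : Function.Injective (fun x : G => (x, (1:G))) := by
      intro x y h; simpa using h
    rw [hset, Set.ncard_union_eq hdisj, Set.ncard_image_of_injective _ hinj,
      ncard_compl_pair hc, Set.ncard_pair (fun h => hc (Prod.ext_iff.mp h).1.symm)]
    omega
  · -- c = 1
    have hset : {q : G × G | P q.1 q.2 ∧ P (q.1 * (1:G)⁻¹) (q.2 * d⁻¹)} =
        ((fun x : G => ((1:G), x)) '' ({1, d}ᶜ)) ∪ {(d⁻¹, (1:G)), (d, d)} := by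
      ext ⟨a, b⟩
      simp only [Set.mem_setOf_eq, Set.mem_union, Set.mem_image, Set.mem_compl_iff,
        Set.mem_insert_iff, Set.mem_singleton_iff, Prod.mk.injEq, inv_one, mul_one, not_or, P]
      constructor
      · rintro ⟨(⟨h1, rfl⟩ | ⟨rfl, h2⟩ | ⟨rfl, h2⟩),
          (⟨q1, q2⟩ | ⟨q1, q2⟩ | ⟨q1, q2⟩)⟩
        · exact absurd (by simpa using q2) hd
        · exact absurd q1 h1
        · exact Or.inr (Or.inl ⟨by simpa using q1, rfl⟩)
        · exact absurd rfl q1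
        · exact Or.inl ⟨b, ⟨h2, fun e => q2 (by simp [e])⟩, rfl, rfl⟩
        · exact absurd rfl q2
        · exact Or.inr (Or.inr ⟨by simpa [mul_inv_eq_one] using q2,
            by simpa [mul_inv_eq_one] using q2⟩)
        · exact absurd q1 h2
        · exact absurd (by simpa using q1.symm) hd
      · rintro (⟨x, ⟨hx1, hx2⟩, rfl, rfl⟩ | ⟨rfl, rfl⟩ | ⟨rfl, rfl⟩)
        · exact ⟨Or.inr (Or.inl ⟨rfl, hx1⟩), Or.inr (Or.inl ⟨rfl, by simp [mul_inv_eq_one, hx2]⟩)⟩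
        · exact ⟨Or.inl ⟨by simp [hd], rfl⟩, Or.inr (Or.inr ⟨by simp, by simp [hd]⟩)⟩
        · exact ⟨Or.inr (Or.inr ⟨rfl, hd⟩), Or.inl ⟨hd, by simp⟩⟩
    have hdisj : Disjoint ((fun x : G => ((1:G), x)) '' ({1, d}ᶜ))
        ({(d⁻¹, (1:G)), (d, d)} : Set (G × G)) := by
      rw [Set.disjoint_left]
      rintro p ⟨x, hx, rfl⟩ (h | h)
      · exact hd (by simpa using (Prod.ext_iff.mp h).1.symm)
      · exact hd ((Prod.ext_iff.mp h).1.symm)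
    have hinj : Function.Injective (fun x : G => ((1:G), x)) := by
      intro x y h; simpa using h
    rw [hset, Set.ncard_union_eq hdisj, Set.ncard_image_of_injective _ hinj,
      ncard_compl_pair hd, Set.ncard_pair (fun h => hd (Prod.ext_iff.mp h).2.symm)]
    omega
  · -- c = d
    have hset : {q : G × G | P q.1 q.2 ∧ P (q.1 * c⁻¹) (q.2 * c⁻¹)} =
        ((fun x : G => (x, x)) '' ({1, c}ᶜ)) ∪ {(c, (1:G)), ((1:G), c)} := by
      ext ⟨a, b⟩
      simp only [Set.mem_setOf_eq, Set.mem_union, Set.mem_image, Set.mem_compl_iff,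
        Set.mem_insert_iff, Set.mem_singleton_iff, Prod.mk.injEq, not_or, P]
      constructor
      · rintro ⟨(⟨h1, rfl⟩ | ⟨rfl, h2⟩ | ⟨rfl, h2⟩),
          (⟨q1, q2⟩ | ⟨q1, q2⟩ | ⟨q1, q2⟩)⟩
        · exact absurd (by simpa using q2) hc
        · exact Or.inr (Or.inl ⟨by simpa [mul_inv_eq_one] using q1, rfl⟩)
        · exact absurd (by simpa using q1) h1
        · exact Or.inr (Or.inr ⟨rfl, by simpa [mul_inv_eq_one] using q2⟩)
        · exact absurd (by simpa using q1) hc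
        · exact absurd (by simpa using q1.symm) h2
        · exact absurd q2 q1
        · exact absurd q1 q2
        · exact Or.inl ⟨a, ⟨h2, fun e => q2 (by simp [e])⟩, rfl, rfl⟩
      · rintro (⟨x, ⟨hx1, hx2⟩, rfl, rfl⟩ | ⟨rfl, rfl⟩ | ⟨rfl, rfl⟩)
        · exact ⟨Or.inr (Or.inr ⟨rfl, hx1⟩), Or.inr (Or.inr ⟨rfl, by simp [mul_inv_eq_one, hx2]⟩)⟩
        · exact ⟨Or.inl ⟨hc, rfl⟩, Or.inr (Or.inl ⟨by simp, by simp [hc]⟩)⟩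
        · exact ⟨Or.inr (Or.inl ⟨rfl, hc⟩), Or.inl ⟨by simp [hc], by simp⟩⟩
    have hdisj : Disjoint ((fun x : G => (x, x)) '' ({1, c}ᶜ))
        ({(c, (1:G)), ((1:G), c)} : Set (G × G)) := by
      rw [Set.disjoint_left]
      rintro p ⟨x, hx, rfl⟩ (h | h)
      · exact hc ((Prod.ext_iff.mp h).1.symm.trans (Prod.ext_iff.mp h).2)
      · exact hc ((Prod.ext_iff.mp h).2.symm.trans (Prod.ext_iff.mp h).1)
    have hinj : Function.Injective (fun x : G => (x, x)) := by
      intro x y h; exact congrArg Prod.fst h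
    rw [hset, Set.ncard_union_eq hdisj, Set.ncard_image_of_injective _ hinj,
      ncard_compl_pair hc, Set.ncard_pair (fun h => hc (Prod.ext_iff.mp h).1)]
    omega

lemma count_nonadj {c d : G} (hc : c ≠ 1) (hd : d ≠ 1) (hcd : c ≠ d) :
    {q : G × G | P q.1 q.2 ∧ P (q.1 * c⁻¹) (q.2 * d⁻¹)}.ncard = 6 := by
  classical
  have key1 : d⁻¹ * c ≠ 1 := fun e => hcd (inv_mul_eq_one.mp e).symm
  have key2 : c⁻¹ * d ≠ 1 := fun e => hcd (inv_mul_eq_one.mp e)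
  have hset : {q : G × G | P q.1 q.2 ∧ P (q.1 * c⁻¹) (q.2 * d⁻¹)} =
      {(c, (1:G)), (d⁻¹ * c, (1:G)), ((1:G), d), ((1:G), c⁻¹ * d), (c, c), (d, d)} := by
    ext ⟨a, b⟩
    simp only [Set.mem_setOf_eq, Set.mem_insert_iff, Set.mem_singleton_iff,
      Prod.mk.injEq, P]
    constructor
    · rintro ⟨(⟨h1, rfl⟩ | ⟨rfl, h2⟩ | ⟨rfl, h2⟩),
        (⟨q1, q2⟩ | ⟨q1, q2⟩ | ⟨q1, q2⟩)⟩
      · exact absurd (by simpa using q2) hd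
      · exact Or.inl ⟨by simpa [mul_inv_eq_one] using q1, rfl⟩
      · refine Or.inr (Or.inl ⟨?_, rfl⟩)
        have : a = 1 * d⁻¹ * c := by
          rw [← q1]; group
        simpa using this
      · exact Or.inr (Or.inr (Or.inl ⟨rfl, by simpa [mul_inv_eq_one] using q2⟩))
      · exact absurd (by simpa using q1) hc
      · refine Or.inr (Or.inr (Or.inr (Or.inl ⟨rfl, ?_⟩)))
        have : b = 1 * c⁻¹ * d := by
          have := q1.symm
          rw [mul_inv_eq_iff_eq_mul] at this
          rw [this]
        simpa using this
      · exact Or.inr (Or.inr (Or.inr (Or.inr (Or.inr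
          ⟨by simpa [mul_inv_eq_one] using q2, by simpa [mul_inv_eq_one] using q2⟩))))
      · exact Or.inr (Or.inr (Or.inr (Or.inr (Or.inl
          ⟨by simpa [mul_inv_eq_one] using q1, by simpa [mul_inv_eq_one] using q1⟩))))
      · exact absurd (inv_injective (mul_left_cancel q1)) hcd
    · rintro (⟨rfl, rfl⟩ | ⟨rfl, rfl⟩ | ⟨rfl, rfl⟩ | ⟨rfl, rfl⟩ | ⟨rfl, rfl⟩ | ⟨rfl, rfl⟩)
      · exact ⟨Or.inl ⟨hc, rfl⟩, Or.inr (Or.inl ⟨by simp, by simp [hd]⟩)⟩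
      · refine ⟨Or.inl ⟨key1, rfl⟩, Or.inr (Or.inr ⟨?_, ?_⟩)⟩
        · group
        · simp [hd]
      · exact ⟨Or.inr (Or.inl ⟨rfl, hd⟩), Or.inl ⟨by simp [hc], by simp⟩⟩
      · refine ⟨Or.inr (Or.inl ⟨rfl, key2⟩), Or.inr (Or.inr ⟨?_, ?_⟩)⟩
        · group
        · simp [hc]
      · exact ⟨Or.inr (Or.inr ⟨rfl, hc⟩),
          Or.inr (Or.inl ⟨by simp, by simp [inv_mul_eq_one, mul_inv_eq_one, hcd]⟩)⟩
      · exact ⟨Or.inr (Or.inr ⟨rfl, hd⟩),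
          Or.inl ⟨by simp [mul_inv_eq_one]; exact fun e => hcd e.symm, by simp⟩⟩
  rw [hset]
  have e1 : c ≠ d⁻¹ * c := fun h => hd (inv_eq_one.mp (mul_eq_right.mp h.symm))
  have e2 : d ≠ c⁻¹ * d := fun h => hc (inv_eq_one.mp (mul_eq_right.mp h.symm))
  have n1 : ((c, (1:G)) : G × G) ∉
      ({(d⁻¹ * c, (1:G)), ((1:G), d), ((1:G), c⁻¹ * d), (c, c), (d, d)} : Set (G × G)) := by
    simp only [Set.mem_insert_iff, Set.mem_singleton_iff, Prod.mk.injEq, not_or]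
    exact ⟨fun h => e1 h.1, fun h => hc h.1, fun h => hc h.1,
      fun h => hc h.2.symm, fun h => hd h.2.symm⟩
  have n2 : ((d⁻¹ * c, (1:G)) : G × G) ∉
      ({((1:G), d), ((1:G), c⁻¹ * d), (c, c), (d, d)} : Set (G × G)) := by
    simp only [Set.mem_insert_iff, Set.mem_singleton_iff, Prod.mk.injEq, not_or]
    exact ⟨fun h => key1 h.1, fun h => key1 h.1,
      fun h => hc h.2.symm, fun h => hd h.2.symm⟩
  have n3 : (((1:G), d) : G × G) ∉
      ({((1:G), c⁻¹ * d), (c, c), (d, d)} : Set (G × G)) := by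
    simp only [Set.mem_insert_iff, Set.mem_singleton_iff, Prod.mk.injEq, not_or]
    exact ⟨fun h => e2 h.2, fun h => hc h.1.symm, fun h => hd h.1.symm⟩
  have n4 : (((1:G), c⁻¹ * d) : G × G) ∉ ({(c, c), (d, d)} : Set (G × G)) := by
    simp only [Set.mem_insert_iff, Set.mem_singleton_iff, Prod.mk.injEq, not_or]
    exact ⟨fun h => hc h.1.symm, fun h => hd h.1.symm⟩
  have n5 : (((c, c)) : G × G) ∉ ({(d, d)} : Set (G × G)) := by
    simp only [Set.mem_singleton_iff, Prod.mk.injEq, not_and]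
    exact fun h => absurd h hcd
  rw [Set.ncard_insert_of_notMem n1, Set.ncard_insert_of_notMem n2,
    Set.ncard_insert_of_notMem n3, Set.ncard_insert_of_notMem n4,
    Set.ncard_pair (fun h => hcd (Prod.ext_iff.mp h).1)]

end Aux

/-- `G_2(G) = Cay(G^2, S)` is strongly regular with parameters
`(|G|^2, 3(|G|−1), |G|, 6)`. -/
theorem strongly_regular_m_two [Group G] [Fintype G] (hG : 1 < Fintype.card G) :
    Fintype.card (Fin 2 → G) = Fintype.card G ^ 2 ∧
    (∀ g : Fin 2 → G, {h : Fin 2 → G | cAdj 2 g h}.ncard =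
      3 * (Fintype.card G - 1)) ∧
    (∀ g h : Fin 2 → G, cAdj 2 g h →
      {v : Fin 2 → G | cAdj 2 g v ∧ cAdj 2 h v}.ncard = Fintype.card G) ∧
    (∀ g h : Fin 2 → G, g ≠ h → ¬ cAdj 2 g h →
      {v : Fin 2 → G | cAdj 2 g v ∧ cAdj 2 h v}.ncard = 6) := by
  classical
  have hcommon : ∀ g h : Fin 2 → G,
      {v : Fin 2 → G | cAdj 2 g v ∧ cAdj 2 h v}.ncard =
        {q : G × G | P q.1 q.2 ∧
          P (q.1 * (h 0 * (g 0)⁻¹)⁻¹) (q.2 * (h 1 * (g 1)⁻¹)⁻¹)}.ncard := by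
    intro g h
    have hrw : {v : Fin 2 → G | cAdj 2 g v ∧ cAdj 2 h v} =
        {v : Fin 2 → G | (fun a b => P (a * (g 0)⁻¹) (b * (g 1)⁻¹) ∧
          P ((a * (g 0)⁻¹) * (h 0 * (g 0)⁻¹)⁻¹) ((b * (g 1)⁻¹) * (h 1 * (g 1)⁻¹)⁻¹))
          (v 0) (v 1)} := by
      ext v
      have e0 : v 0 * (g 0)⁻¹ * (h 0 * (g 0)⁻¹)⁻¹ = v 0 * (h 0)⁻¹ := by group
      have e1 : v 1 * (g 1)⁻¹ * (h 1 * (g 1)⁻¹)⁻¹ = v 1 * (h 1)⁻¹ := by group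
      simp only [Set.mem_setOf_eq, cAdj_iff, e0, e1]
    have h2 := ncard_setQ (fun a b => P (a * (g 0)⁻¹) (b * (g 1)⁻¹) ∧
      P ((a * (g 0)⁻¹) * (h 0 * (g 0)⁻¹)⁻¹) ((b * (g 1)⁻¹) * (h 1 * (g 1)⁻¹)⁻¹))
    rw [hrw, h2]
    exact shift_ncard (g 0) (g 1)
      {q : G × G | P q.1 q.2 ∧ P (q.1 * (h 0 * (g 0)⁻¹)⁻¹) (q.2 * (h 1 * (g 1)⁻¹)⁻¹)}
  refine ⟨by simp, ?_, ?_, ?_⟩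
  · intro g
    have hrw : {h : Fin 2 → G | cAdj 2 g h} =
        {v : Fin 2 → G | (fun a b => P (a * (g 0)⁻¹) (b * (g 1)⁻¹)) (v 0) (v 1)} := by
      ext v
      simp only [Set.mem_setOf_eq, cAdj_iff]
    have h2 := ncard_setQ (fun a b => P (a * (g 0)⁻¹) (b * (g 1)⁻¹))
    rw [hrw, h2]
    exact (shift_ncard (g 0) (g 1) {q : G × G | P q.1 q.2}).trans count_P
  · intro g h hadj
    rw [hcommon g h]
    exact count_adj hG ((cAdj_iff g h).mp hadj)
  · intro g h hne hadj
    have hP : ¬ P (h 0 * (g 0)⁻¹) (h 1 * (g 1)⁻¹) := fun hp => hadj ((cAdj_iff g h).mpr hp)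
    have hne' : ¬ (h 0 * (g 0)⁻¹ = 1 ∧ h 1 * (g 1)⁻¹ = 1) := by
      rintro ⟨e0, e1⟩
      apply hne
      rw [mul_inv_eq_one] at e0 e1
      funext i; fin_cases i
      · exact e0.symm
      · exact e1.symm
    rw [hcommon g h]
    set c := h 0 * (g 0)⁻¹ with hcdef
    set d := h 1 * (g 1)⁻¹ with hddef
    have hc : c ≠ 1 := by
      intro e
      by_cases he : d = 1
      · exact hne' ⟨e, he⟩
      · exact hP (Or.inr (Or.inl ⟨e, he⟩))
    have hd : d ≠ 1 := fun e => hP (Or.inl ⟨hc, e⟩)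
    have hcd : c ≠ d := fun e => hP (Or.inr (Or.inr ⟨e, hc⟩))
    exact count_nonadj hc hd hcd
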